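/- The nested Monte Carlo early-exercise-premium estimator is biased high: E[U_{N,N_d}] ≥ U_0. -/

import Mathlib

open MeasureTheory ProbabilityTheory Set ENNReal
section Aux

variable {Ω : Type*} {mΩ : MeasurableSpace Ω} {E : Type*} [MeasurableSpace E]

lemma aux0 {μ : Measure Ω} [IsFiniteMeasure μ] {Y W : Ω → E}
    (hY : Measurable Y) (hW : Measurable W) (κ' : Kernel E E) [IsMarkovKernel κ']
    (h : ∀ A, MeasurableSet A → ∫ ω, A.indicator (fun _ => (1:ℝ)) (Y ω) ∂μ
        = ∫ ω, (κ' (W ω) A).toReal ∂μ) :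
    ∀ A, MeasurableSet A → μ (Y ⁻¹' A) = ∫⁻ ω, κ' (W ω) A ∂μ := by
  intro A hA
  have hind : (fun ω => A.indicator (fun _ => (1:ℝ)) (Y ω))
      = (Y ⁻¹' A).indicator (fun _ => (1:ℝ)) := by
    ext ω
    by_cases hω : Y ω ∈ A
    · simp [Set.indicator_of_mem, hω, Set.mem_preimage]
    · simp [Set.indicator_of_notMem, hω, Set.mem_preimage]
  have hL : ∫ ω, A.indicator (fun _ => (1:ℝ)) (Y ω) ∂μ = (μ (Y ⁻¹' A)).toReal := by
    rw [hind, integral_indicator_const (1:ℝ) (hY hA), smul_eq_mul, mul_one, measureReal_def]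
  have hmeas : Measurable fun ω => κ' (W ω) A := (Kernel.measurable_coe κ' hA).comp hW
  have hR : ∫ ω, (κ' (W ω) A).toReal ∂μ = (∫⁻ ω, κ' (W ω) A ∂μ).toReal := by
    rw [integral_toReal hmeas.aemeasurable]
    exact Filter.Eventually.of_forall fun ω => measure_lt_top _ _
  have hfin : ∫⁻ ω, κ' (W ω) A ∂μ ≠ ⊤ := by
    refine ne_of_lt (lt_of_le_of_lt (lintegral_mono fun ω => prob_le_one) ?_)
    rw [lintegral_const, one_mul]
    exact measure_lt_top μ _
  have heq : (μ (Y ⁻¹' A)).toReal = (∫⁻ ω, κ' (W ω) A ∂μ).toReal := by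
    rw [← hL, ← hR]; exact h A hA
  exact (ENNReal.toReal_eq_toReal_iff' (measure_ne_top μ _) hfin).mp heq

lemma aux_map {μ : Measure Ω} [IsFiniteMeasure μ] {Y W : Ω → E}
    (hY : Measurable Y) (hW : Measurable W) (κ' : Kernel E E) [IsMarkovKernel κ']
    (h : ∀ A, MeasurableSet A → μ (Y ⁻¹' A) = ∫⁻ ω, κ' (W ω) A ∂μ) :
    Measure.map Y μ = (μ.compProd (κ'.comap W hW)).snd := by
  ext A hA
  rw [Measure.map_apply hY hA, Measure.snd_apply hA,
    Measure.compProd_apply (measurable_snd hA), h A hA]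
  refine lintegral_congr fun ω => ?_
  have hset : Prod.mk ω ⁻¹' (Prod.snd ⁻¹' A) = A := rfl
  rw [Kernel.comap_apply, hset]

lemma aux_lintegral {μ : Measure Ω} [IsFiniteMeasure μ] {Y W : Ω → E}
    (hY : Measurable Y) (hW : Measurable W) (κ' : Kernel E E) [IsMarkovKernel κ']
    (hmap : Measure.map Y μ = (μ.compProd (κ'.comap W hW)).snd)
    {f : E → ℝ≥0∞} (hf : Measurable f) :
    ∫⁻ ω, f (Y ω) ∂μ = ∫⁻ ω, ∫⁻ y, f y ∂(κ' (W ω)) ∂μ := by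
  rw [← lintegral_map hf hY, hmap, Measure.snd, lintegral_map hf measurable_snd,
    Measure.lintegral_compProd (f := fun p => f p.2) (hf.comp measurable_snd)]
  refine lintegral_congr fun ω => ?_
  rw [Kernel.comap_apply]

lemma aux_integral {μ : Measure Ω} [IsFiniteMeasure μ] {Y W : Ω → E}
    (hY : Measurable Y) (hW : Measurable W) (κ' : Kernel E E) [IsMarkovKernel κ']
    (hmap : Measure.map Y μ = (μ.compProd (κ'.comap W hW)).snd)
    {v : E → ℝ} (hv : Measurable v) (hint : Integrable (fun ω => v (Y ω)) μ) :
    ∫ ω, v (Y ω) ∂μ = ∫ ω, ∫ y, v y ∂(κ' (W ω)) ∂μ := by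
  have hYae : AEMeasurable Y μ := hY.aemeasurable
  have h1 : Integrable v (Measure.map Y μ) :=
    (integrable_map_measure hv.aestronglyMeasurable hYae).mpr hint
  have h2 : Integrable (fun p : Ω × E => v p.2) (μ.compProd (κ'.comap W hW)) := by
    have := h1
    rw [hmap, Measure.snd] at this
    exact (integrable_map_measure hv.aestronglyMeasurable measurable_snd.aemeasurable).mp this
  calc ∫ ω, v (Y ω) ∂μ = ∫ y, v y ∂(Measure.map Y μ) :=
        (integral_map hYae hv.aestronglyMeasurable).symm
    _ = ∫ p, v p.2 ∂(μ.compProd (κ'.comap W hW)) := by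
        rw [hmap, Measure.snd, integral_map measurable_snd.aemeasurable hv.aestronglyMeasurable]
    _ = ∫ ω, ∫ y, v y ∂(κ' (W ω)) ∂μ := by
        rw [Measure.integral_compProd h2]
        exact integral_congr_ae (Filter.Eventually.of_forall fun ω => by
          simp only [Kernel.comap_apply])

end Aux

section Aux2

variable {Ω : Type*} {G' : MeasurableSpace Ω} {mΩ : MeasurableSpace Ω}
  {E : Type*} [MeasurableSpace E]

lemma aux_ind {Ω E : Type*} (Y : Ω → E) (A : Set E) :
    (fun ω => A.indicator (fun _ => (1:ℝ)) (Y ω)) = (Y ⁻¹' A).indicator (fun _ => (1:ℝ)) := by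
  ext ω
  by_cases hω : Y ω ∈ A
  · simp [Set.indicator_of_mem, hω, Set.mem_preimage]
  · simp [Set.indicator_of_notMem, hω, Set.mem_preimage]

lemma aux_law {P : Measure Ω} [IsProbabilityMeasure P] {Y W : Ω → E}
    (hY : Measurable Y) (hW : Measurable W) (κ' : Kernel E E) [IsMarkovKernel κ']
    (hG' : G' ≤ mΩ)
    (hcond : ∀ A : Set E, MeasurableSet A →
      (P[fun ω => A.indicator (fun _ => (1:ℝ)) (Y ω) | G'])
        =ᵐ[P] fun ω => ((κ' (W ω)) A).toReal) :
    Measure.map Y P = (P.compProd (κ'.comap W hW)).snd := by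
  haveI : SigmaFinite (P.trim hG') := (isFiniteMeasure_trim hG').toSigmaFinite
  refine aux_map hY hW κ' (aux0 hY hW κ' ?_)
  intro A hA
  rw [← integral_condExp hG' (f := fun ω => A.indicator (fun _ => (1:ℝ)) (Y ω))]
  exact integral_congr_ae (hcond A hA)

lemma aux_snd_eq {P : Measure Ω} [IsProbabilityMeasure P] {W W' : Ω → E}
    (hW : Measurable W) (hW' : Measurable W')
    (hmap : Measure.map W P = Measure.map W' P)
    (κ' : Kernel E E) [IsMarkovKernel κ'] :
    (P.compProd (κ'.comap W hW)).snd = (P.compProd (κ'.comap W' hW')).snd := by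
  ext A hA
  rw [Measure.snd_apply hA, Measure.snd_apply hA,
      Measure.compProd_apply (measurable_snd hA), Measure.compProd_apply (measurable_snd hA)]
  have hset : ∀ ω : Ω, Prod.mk ω ⁻¹' (Prod.snd ⁻¹' A) = A := fun _ => rfl
  simp_rw [Kernel.comap_apply, hset]
  have hf : Measurable fun x : E => κ' x A := Kernel.measurable_coe _ hA
  rw [← lintegral_map hf hW, ← lintegral_map hf hW', hmap]

lemma aux_condexp {P : Measure Ω} [IsProbabilityMeasure P] {Y W : Ω → E}
    (hY : Measurable Y) (hW : Measurable W) (κ' : Kernel E E) [IsMarkovKernel κ']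
    (hG' : G' ≤ mΩ) (hWG' : Measurable[G'] W)
    (hcond : ∀ A : Set E, MeasurableSet A →
      (P[fun ω => A.indicator (fun _ => (1:ℝ)) (Y ω) | G'])
        =ᵐ[P] fun ω => ((κ' (W ω)) A).toReal)
    {v : E → ℝ} (hv : Measurable v) (hvi : Integrable (fun ω => v (Y ω)) P) :
    P[(fun ω => v (Y ω)) | G'] =ᵐ[P] fun ω => ∫ y, v y ∂(κ' (W ω)) := by
  haveI : SigmaFinite (P.trim hG') := (isFiniteMeasure_trim hG').toSigmaFinite
  -- strong measurability of the kernel integral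
  have hWsm : StronglyMeasurable (fun x : E => ∫ y, v y ∂(κ' x)) :=
    StronglyMeasurable.integral_kernel_prod_right'
      (f := fun p : E × E => v p.2) (((hv).comp measurable_snd).stronglyMeasurable)
  have hmsm : StronglyMeasurable[G'] (fun ω => ∫ y, v y ∂(κ' (W ω))) :=
    hWsm.comp_measurable hWG'
  -- global identity and integrability of the kernel mean
  have hglob : ∀ A, MeasurableSet A → P (Y ⁻¹' A) = ∫⁻ ω, κ' (W ω) A ∂P := by
    refine aux0 hY hW κ' ?_
    intro A hA
    rw [← integral_condExp hG' (f := fun ω => A.indicator (fun _ => (1:ℝ)) (Y ω))]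
    exact integral_congr_ae (hcond A hA)
  have hmap := aux_map hY hW κ' hglob
  have hlf := aux_lintegral hY hW κ' hmap (hv.enorm)
  have hmInt : Integrable (fun ω => ∫ y, v y ∂(κ' (W ω))) P := by
    refine ⟨(hmsm.mono hG').aestronglyMeasurable, ?_⟩
    refine lt_of_le_of_lt
      (lintegral_mono fun ω => enorm_integral_le_lintegral_enorm _) ?_
    rw [← hlf]
    exact hvi.2
  -- set-integral identity on G'-sets
  refine (ae_eq_condExp_of_forall_setIntegral_eq hG' hvi
    (fun s _ _ => hmInt.integrableOn) ?_ hmsm.aestronglyMeasurable).symm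
  intro s hs _
  have hsid : ∀ A, MeasurableSet A →
      (P.restrict s) (Y ⁻¹' A) = ∫⁻ ω, κ' (W ω) A ∂(P.restrict s) := by
    refine aux0 hY hW κ' ?_
    intro A hA
    have hint : Integrable (fun ω => A.indicator (fun _ => (1:ℝ)) (Y ω)) P := by
      rw [aux_ind Y A]
      exact (integrable_const (1:ℝ)).indicator (hY hA)
    calc ∫ ω in s, A.indicator (fun _ => (1:ℝ)) (Y ω) ∂P
        = ∫ ω in s, (P[fun ω => A.indicator (fun _ => (1:ℝ)) (Y ω)|G']) ω ∂P :=
          (setIntegral_condExp hG' hint hs).symm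
      _ = ∫ ω in s, (κ' (W ω) A).toReal ∂P :=
          integral_congr_ae (ae_restrict_of_ae (hcond A hA))
  exact (aux_integral hY hW κ' (aux_map hY hW κ' hsid) hv hvi.restrict).symm

end Aux2

/-- Proposition 1, inequality (9): the nested Monte Carlo early-exercise-premium estimator
U_{N,N_d} is biased high, i.e. E[U_{N,N_d}] ≥ U_0. -/
theorem nested_eep_estimator_biased_high
    {Ω : Type*} {mΩ : MeasurableSpace Ω} (P : Measure Ω) [IsProbabilityMeasure P]
    (d J N Nd : ℕ) (hN : 1 ≤ N) (hNd : 1 ≤ Nd) (x0 : Fin d → ℝ)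
    -- the Markov chain
    (X : ℕ → Ω → (Fin d → ℝ)) (hXm : ∀ j, Measurable (X j)) (hX0 : ∀ ω, X 0 ω = x0)
    (κ : ℕ → Kernel (Fin d → ℝ) (Fin d → ℝ)) (hκ : ∀ l, IsMarkovKernel (κ l))
    (hMarkov : ∀ l, 1 ≤ l → l ≤ J → ∀ A : Set (Fin d → ℝ), MeasurableSet A →
      (P[fun ω => A.indicator (fun _ => (1 : ℝ)) (X l ω) |
          ⨆ i ∈ Finset.range l, MeasurableSpace.comap (X i) inferInstance])
        =ᵐ[P] fun ω => ((κ l (X (l - 1) ω)) A).toReal)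
    -- payoffs and lower approximations of the value functions
    (g : ℕ → (Fin d → ℝ) → ℝ) (hgm : ∀ j, Measurable (g j)) (hgnonneg : ∀ j x, 0 ≤ g j x)
    (hgL2 : ∀ j, j ≤ J → MemLp (fun ω => g j (X j ω)) 2 P)
    (v : ℕ → (Fin d → ℝ) → ℝ) (hvm : ∀ l, Measurable (v l))
    (hvL2 : ∀ l, 1 ≤ l → l ≤ J → MemLp (fun ω => v l (X l ω)) 2 P)
    -- outer paths: independent copies of the chain
    (Xo : Fin N → ℕ → Ω → (Fin d → ℝ)) (hXom : ∀ n j, Measurable (Xo n j))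
    (hlaw : ∀ n, Measure.map (fun ω => fun j : Fin (J + 1) => Xo n (j : ℕ) ω) P
      = Measure.map (fun ω => fun j : Fin (J + 1) => X (j : ℕ) ω) P)
    (hIndepOuter : iIndepFun
      (fun n : Fin N => fun ω => fun j : Fin (J + 1) => Xo n (j : ℕ) ω) P)
    -- inner samples: conditionally independent given the outer paths, with the right law
    (Xi : Fin N → Fin Nd → ℕ → Ω → (Fin d → ℝ)) (hXim : ∀ n nd l, Measurable (Xi n nd l))
    (hCondLaw : ∀ (n : Fin N) (nd : Fin Nd) (l : ℕ), 1 ≤ l → l ≤ J →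
      ∀ A : Set (Fin d → ℝ), MeasurableSet A →
      (P[fun ω => A.indicator (fun _ => (1 : ℝ)) (Xi n nd l ω) |
          (⨆ (m : Fin N) (j ∈ Finset.range (J + 1)),
            MeasurableSpace.comap (Xo m j) inferInstance) ⊔
          (⨆ (m : Fin N) (md : Fin Nd) (i ∈ Finset.Icc 1 J)
            (_ : ¬(m = n ∧ md = nd ∧ i = l)),
            MeasurableSpace.comap (Xi m md i) inferInstance)])
        =ᵐ[P] fun ω => ((κ l (Xo n (l - 1) ω)) A).toReal) :
    (∫ ω, (g J (X J ω) + ∑ l ∈ Finset.Icc 1 J,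
        max (g (l - 1) (X (l - 1) ω) - ∫ y, v l y ∂(κ l (X (l - 1) ω))) 0) ∂P)
      ≤ ∫ ω, (N : ℝ)⁻¹ * ∑ n : Fin N,
          (g J (Xo n J ω) + ∑ j ∈ Finset.Icc 1 J,
            max (g (j - 1) (Xo n (j - 1) ω)
              - (Nd : ℝ)⁻¹ * ∑ nd : Fin Nd, v j (Xi n nd j ω)) 0) ∂P := by
  classical
  -- path measurability and coordinate laws
  have hpathXo : ∀ n, Measurable (fun ω => fun j : Fin (J+1) => Xo n (j:ℕ) ω) :=
    fun n => measurable_pi_lambda _ fun j => hXom n j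
  have hpathX : Measurable (fun ω => fun j : Fin (J+1) => X (j:ℕ) ω) :=
    measurable_pi_lambda _ fun j => hXm j
  have hcoord : ∀ (n : Fin N) (j : ℕ), j ≤ J →
      Measure.map (Xo n j) P = Measure.map (X j) P := by
    intro n j hj
    have hlt : j < J + 1 := Nat.lt_succ_of_le hj
    have h := congrArg
      (Measure.map (fun p : Fin (J+1) → (Fin d → ℝ) => p ⟨j, hlt⟩)) (hlaw n)
    rw [Measure.map_map (measurable_pi_apply _) (hpathXo n),
      Measure.map_map (measurable_pi_apply _) hpathX] at h
    exact h
  -- memℒp/integrability of payoffs along outer paths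
  have hgMem : ∀ (n : Fin N) (j : ℕ), j ≤ J → MemLp (fun ω => g j (Xo n j ω)) 2 P := by
    intro n j hj
    have h1 : MemLp (g j) 2 (Measure.map (X j) P) :=
      (memLp_map_measure_iff (hgm j).aestronglyMeasurable (hXm j).aemeasurable).mpr (hgL2 j hj)
    rw [← hcoord n j hj] at h1
    exact (memLp_map_measure_iff (hgm j).aestronglyMeasurable (hXom n j).aemeasurable).mp h1
  have hgInt : ∀ (n : Fin N) (j : ℕ), j ≤ J → Integrable (fun ω => g j (Xo n j ω)) P :=
    fun n j hj => (hgMem n j hj).integrable one_le_two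
  -- σ-algebra facts
  have h𝒢le : (⨆ (m : Fin N) (j ∈ Finset.range (J + 1)), MeasurableSpace.comap (Xo m j) inferInstance) ≤ mΩ :=
    iSup_le fun m => iSup_le fun j => iSup_le fun _ => (hXom m j).comap_le
  have hcomapXo : ∀ (m : Fin N) (j : ℕ), j < J + 1 →
      MeasurableSpace.comap (Xo m j) inferInstance ≤ (⨆ (m : Fin N) (j ∈ Finset.range (J + 1)), MeasurableSpace.comap (Xo m j) inferInstance) := fun m j hj =>
    le_iSup_of_le m (le_iSup_of_le j (le_iSup_of_le (Finset.mem_range.mpr hj) le_rfl))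
  have hXo𝒢 : ∀ (m : Fin N) (j : ℕ), j < J + 1 → Measurable[(⨆ (m : Fin N) (j ∈ Finset.range (J + 1)), MeasurableSpace.comap (Xo m j) inferInstance)] (Xo m j) :=
    fun m j hj => measurable_iff_comap_le.mpr (hcomapXo m j hj)
  have h𝒢'le : ∀ (n : Fin N) (nd : Fin Nd) (l : ℕ), (⨆ (m : Fin N) (j ∈ Finset.range (J + 1)), MeasurableSpace.comap (Xo m j) inferInstance) ⊔ (⨆ (m : Fin N) (md : Fin Nd) (i ∈ Finset.Icc 1 J) (_ : ¬(m = n ∧ md = nd ∧ i = l)), MeasurableSpace.comap (Xi m md i) inferInstance) ≤ mΩ := by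
    intro n nd l
    refine sup_le h𝒢le ?_
    exact iSup_le fun m => iSup_le fun md => iSup_le fun i => iSup_le fun _ =>
      iSup_le fun _ => (hXim m md i).comap_le
  -- kernel-mean measurability
  have hFkm : ∀ l, StronglyMeasurable (fun x : Fin d → ℝ => ∫ y, v l y ∂(κ l x)) := by
    intro l
    haveI := hκ l
    exact StronglyMeasurable.integral_kernel_prod_right'
      (f := fun p : (Fin d → ℝ) × (Fin d → ℝ) => v l p.2)
      (((hvm l).comp measurable_snd).stronglyMeasurable)
  -- laws of inner samples
  have hlawXi : ∀ (n : Fin N) (nd : Fin Nd) (l : ℕ), 1 ≤ l → l ≤ J →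
      Measure.map (Xi n nd l) P = Measure.map (X l) P := by
    intro n nd l hl1 hlJ
    haveI := hκ l
    have hl1' : l - 1 ≤ J := le_trans (Nat.sub_le l 1) hlJ
    have h1 := aux_law (hXim n nd l) (hXom n (l-1)) (κ l) (h𝒢'le n nd l)
      (hCondLaw n nd l hl1 hlJ)
    have hFle : (⨆ i ∈ Finset.range l, MeasurableSpace.comap (X i) inferInstance) ≤ mΩ :=
      iSup_le fun i => iSup_le fun _ => (hXm i).comap_le
    have h2 := aux_law (hXm l) (hXm (l-1)) (κ l) hFle (hMarkov l hl1 hlJ)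
    rw [h1, h2]
    exact aux_snd_eq (hXom n (l-1)) (hXm (l-1)) (hcoord n (l-1) hl1') (κ l)
  -- integrability of inner evaluations
  have hviInt : ∀ (n : Fin N) (nd : Fin Nd) (l : ℕ), 1 ≤ l → l ≤ J →
      Integrable (fun ω => v l (Xi n nd l ω)) P := by
    intro n nd l hl1 hlJ
    have h1 : MemLp (v l) 2 (Measure.map (X l) P) :=
      (memLp_map_measure_iff (hvm l).aestronglyMeasurable (hXm l).aemeasurable).mpr
        (hvL2 l hl1 hlJ)
    rw [← hlawXi n nd l hl1 hlJ] at h1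
    exact ((memLp_map_measure_iff (hvm l).aestronglyMeasurable
      (hXim n nd l).aemeasurable).mp h1).integrable one_le_two
  -- conditional expectation of an inner evaluation given everything else
  have key1 : ∀ (n : Fin N) (nd : Fin Nd) (l : ℕ), 1 ≤ l → l ≤ J →
      P[(fun ω => v l (Xi n nd l ω)) | (⨆ (m : Fin N) (j ∈ Finset.range (J + 1)), MeasurableSpace.comap (Xo m j) inferInstance) ⊔ (⨆ (m : Fin N) (md : Fin Nd) (i ∈ Finset.Icc 1 J) (_ : ¬(m = n ∧ md = nd ∧ i = l)), MeasurableSpace.comap (Xi m md i) inferInstance)]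
        =ᵐ[P] fun ω => ∫ y, v l y ∂(κ l (Xo n (l-1) ω)) := by
    intro n nd l hl1 hlJ
    haveI := hκ l
    have hl1' : l - 1 < J + 1 := Nat.lt_succ_of_le (le_trans (Nat.sub_le l 1) hlJ)
    exact aux_condexp (hXim n nd l) (hXom n (l-1)) (κ l) (h𝒢'le n nd l)
      (measurable_iff_comap_le.mpr (le_trans (hcomapXo n (l-1) hl1') le_sup_left))
      (hCondLaw n nd l hl1 hlJ) (hvm l) (hviInt n nd l hl1 hlJ)
  -- kernel means are integrable
  have hmInt : ∀ (n : Fin N) (l : ℕ), 1 ≤ l → l ≤ J →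
      Integrable (fun ω => ∫ y, v l y ∂(κ l (Xo n (l-1) ω))) P := by
    intro n l hl1 hlJ
    haveI := hκ l
    have nd0 : Fin Nd := ⟨0, hNd⟩
    constructor
    · exact (((hFkm l).comp_measurable (hXom n (l-1)))).aestronglyMeasurable
    · have hglob : ∀ A, MeasurableSet A →
          P (Xi n nd0 l ⁻¹' A) = ∫⁻ ω, κ l (Xo n (l-1) ω) A ∂P := by
        refine aux0 (hXim n nd0 l) (hXom n (l-1)) (κ l) ?_
        intro A hA
        rw [← integral_condExp (h𝒢'le n nd0 l)
          (f := fun ω => A.indicator (fun _ => (1:ℝ)) (Xi n nd0 l ω))]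
        exact integral_congr_ae (hCondLaw n nd0 l hl1 hlJ A hA)
      have hmap := aux_map (hXim n nd0 l) (hXom n (l-1)) (κ l) hglob
      have hlf := aux_lintegral (hXim n nd0 l) (hXom n (l-1)) (κ l) hmap ((hvm l).enorm)
      refine lt_of_le_of_lt
        (lintegral_mono fun ω => enorm_integral_le_lintegral_enorm _) ?_
      rw [← hlf]
      exact (hviInt n nd0 l hl1 hlJ).2
  -- tower property: condition down to the outer σ-algebra
  have key2 : ∀ (n : Fin N) (nd : Fin Nd) (l : ℕ), 1 ≤ l → l ≤ J →
      P[(fun ω => v l (Xi n nd l ω)) | (⨆ (m : Fin N) (j ∈ Finset.range (J + 1)), MeasurableSpace.comap (Xo m j) inferInstance)]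
        =ᵐ[P] fun ω => ∫ y, v l y ∂(κ l (Xo n (l-1) ω)) := by
    intro n nd l hl1 hlJ
    haveI := hκ l
    haveI : SigmaFinite (P.trim h𝒢le) := (isFiniteMeasure_trim h𝒢le).toSigmaFinite
    haveI : SigmaFinite (P.trim (h𝒢'le n nd l)) :=
      (isFiniteMeasure_trim _).toSigmaFinite
    have hl1' : l - 1 < J + 1 := Nat.lt_succ_of_le (le_trans (Nat.sub_le l 1) hlJ)
    have htower := condExp_condExp_of_le
      (le_sup_left : (⨆ (m : Fin N) (j ∈ Finset.range (J + 1)), MeasurableSpace.comap (Xo m j) inferInstance) ≤ (⨆ (m : Fin N) (j ∈ Finset.range (J + 1)), MeasurableSpace.comap (Xo m j) inferInstance) ⊔ (⨆ (m : Fin N) (md : Fin Nd) (i ∈ Finset.Icc 1 J) (_ : ¬(m = n ∧ md = nd ∧ i = l)), MeasurableSpace.comap (Xi m md i) inferInstance)) (h𝒢'le n nd l)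
      (f := fun ω => v l (Xi n nd l ω)) (μ := P)
    have h2 := condExp_congr_ae (m := (⨆ (m : Fin N) (j ∈ Finset.range (J + 1)), MeasurableSpace.comap (Xo m j) inferInstance)) (μ := P) (key1 n nd l hl1 hlJ)
    have h3 : P[(fun ω => ∫ y, v l y ∂(κ l (Xo n (l-1) ω)))|(⨆ (m : Fin N) (j ∈ Finset.range (J + 1)), MeasurableSpace.comap (Xo m j) inferInstance)]
        = fun ω => ∫ y, v l y ∂(κ l (Xo n (l-1) ω)) :=
      condExp_of_stronglyMeasurable h𝒢le
        ((hFkm l).comp_measurable (hXo𝒢 n (l-1) hl1')) (hmInt n l hl1 hlJ)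
    refine htower.symm.trans (h2.trans ?_)
    rw [h3]
  -- conditional expectation of the inner Monte Carlo average
  have key3 : ∀ (n : Fin N) (l : ℕ), 1 ≤ l → l ≤ J →
      P[(fun ω => (Nd:ℝ)⁻¹ * ∑ nd : Fin Nd, v l (Xi n nd l ω)) | (⨆ (m : Fin N) (j ∈ Finset.range (J + 1)), MeasurableSpace.comap (Xo m j) inferInstance)]
        =ᵐ[P] fun ω => ∫ y, v l y ∂(κ l (Xo n (l-1) ω)) := by
    intro n l hl1 hlJ
    haveI : SigmaFinite (P.trim h𝒢le) := (isFiniteMeasure_trim h𝒢le).toSigmaFinite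
    have hsum : P[(fun ω => ∑ nd : Fin Nd, v l (Xi n nd l ω)) | (⨆ (m : Fin N) (j ∈ Finset.range (J + 1)), MeasurableSpace.comap (Xo m j) inferInstance)]
        =ᵐ[P] fun ω => (Nd:ℝ) * ∫ y, v l y ∂(κ l (Xo n (l-1) ω)) := by
      have hfn : (fun ω => ∑ nd : Fin Nd, v l (Xi n nd l ω))
          = ∑ nd : Fin Nd, (fun ω => v l (Xi n nd l ω)) := by
        ext ω; simp
      have h1 := condExp_finset_sum (m := (⨆ (m : Fin N) (j ∈ Finset.range (J + 1)), MeasurableSpace.comap (Xo m j) inferInstance)) (μ := P) (s := Finset.univ)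
        (f := fun (nd : Fin Nd) (ω : Ω) => v l (Xi n nd l ω))
        (fun nd _ => hviInt n nd l hl1 hlJ)
      have h2 : ∀ᵐ ω ∂P, ∀ nd : Fin Nd, (P[(fun ω => v l (Xi n nd l ω))|(⨆ (m : Fin N) (j ∈ Finset.range (J + 1)), MeasurableSpace.comap (Xo m j) inferInstance)]) ω
          = ∫ y, v l y ∂(κ l (Xo n (l-1) ω)) :=
        (ae_all_iff).mpr fun nd => key2 n nd l hl1 hlJ
      rw [hfn]
      refine h1.trans ?_
      filter_upwards [h2] with ω hω
      simp only [Finset.sum_apply]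
      rw [Finset.sum_congr rfl fun nd _ => hω nd, Finset.sum_const, Finset.card_univ,
        Fintype.card_fin, nsmul_eq_mul]
    have hc := condExp_smul (μ := P) (m := (⨆ (m : Fin N) (j ∈ Finset.range (J + 1)), MeasurableSpace.comap (Xo m j) inferInstance)) ((Nd:ℝ)⁻¹)
      (fun ω => ∑ nd : Fin Nd, v l (Xi n nd l ω))
    have heq : (fun ω => (Nd:ℝ)⁻¹ * ∑ nd : Fin Nd, v l (Xi n nd l ω))
        = ((Nd:ℝ)⁻¹ • (fun ω => ∑ nd : Fin Nd, v l (Xi n nd l ω))) := rfl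
    rw [heq]
    refine hc.trans ?_
    filter_upwards [hsum] with ω hω
    have hNd0 : (Nd:ℝ) ≠ 0 := Nat.cast_ne_zero.mpr (by omega)
    simp only [Pi.smul_apply, smul_eq_mul]
    rw [hω, ← mul_assoc, inv_mul_cancel₀ hNd0, one_mul]
  -- the per-(n,l) Jensen-type inequality
  have key4 : ∀ (n : Fin N) (l : ℕ), 1 ≤ l → l ≤ J →
      ∫ ω, max (g (l-1) (Xo n (l-1) ω) - ∫ y, v l y ∂(κ l (Xo n (l-1) ω))) 0 ∂P
        ≤ ∫ ω, max (g (l-1) (Xo n (l-1) ω)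
            - (Nd:ℝ)⁻¹ * ∑ nd : Fin Nd, v l (Xi n nd l ω)) 0 ∂P := by
    intro n l hl1 hlJ
    haveI := hκ l
    haveI : SigmaFinite (P.trim h𝒢le) := (isFiniteMeasure_trim h𝒢le).toSigmaFinite
    have hl1' : l - 1 ≤ J := le_trans (Nat.sub_le l 1) hlJ
    have hl1'' : l - 1 < J + 1 := Nat.lt_succ_of_le hl1'
    have haInt : Integrable (fun ω => g (l-1) (Xo n (l-1) ω)) P := hgInt n (l-1) hl1'
    have hZInt : Integrable (fun ω => (Nd:ℝ)⁻¹ * ∑ nd : Fin Nd, v l (Xi n nd l ω)) P := by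
      have := (integrable_finset_sum Finset.univ
        (fun (nd : Fin Nd) (_ : nd ∈ Finset.univ) => hviInt n nd l hl1 hlJ)).const_mul ((Nd:ℝ)⁻¹)
      exact this
    have hMf : Integrable (fun ω => ∫ y, v l y ∂(κ l (Xo n (l-1) ω))) P := hmInt n l hl1 hlJ
    have haG : StronglyMeasurable[(⨆ (m : Fin N) (j ∈ Finset.range (J + 1)), MeasurableSpace.comap (Xo m j) inferInstance)] (fun ω => g (l-1) (Xo n (l-1) ω)) :=
      (hgm (l-1)).stronglyMeasurable.comp_measurable (hXo𝒢 n (l-1) hl1'')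
    have hba : P[(fun ω => g (l-1) (Xo n (l-1) ω))|(⨆ (m : Fin N) (j ∈ Finset.range (J + 1)), MeasurableSpace.comap (Xo m j) inferInstance)] = fun ω => g (l-1) (Xo n (l-1) ω) :=
      condExp_of_stronglyMeasurable h𝒢le haG haInt
    have hdiffInt : Integrable (fun ω => g (l-1) (Xo n (l-1) ω)
        - (Nd:ℝ)⁻¹ * ∑ nd : Fin Nd, v l (Xi n nd l ω)) P := haInt.sub hZInt
    have hmono := condExp_mono (m := (⨆ (m : Fin N) (j ∈ Finset.range (J + 1)), MeasurableSpace.comap (Xo m j) inferInstance)) (μ := P) hdiffInt hdiffInt.pos_part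
      (Filter.Eventually.of_forall fun ω =>
        (le_max_left _ 0 : _ ≤ max (g (l-1) (Xo n (l-1) ω)
          - (Nd:ℝ)⁻¹ * ∑ nd : Fin Nd, v l (Xi n nd l ω)) 0))
    have hsub := condExp_sub (m := (⨆ (m : Fin N) (j ∈ Finset.range (J + 1)), MeasurableSpace.comap (Xo m j) inferInstance)) (μ := P) haInt hZInt
    have hzk := key3 n l hl1 hlJ
    have hnonneg : (0 : Ω → ℝ) ≤ᵐ[P] P[(fun ω => max (g (l-1) (Xo n (l-1) ω)
        - (Nd:ℝ)⁻¹ * ∑ nd : Fin Nd, v l (Xi n nd l ω)) 0)|(⨆ (m : Fin N) (j ∈ Finset.range (J + 1)), MeasurableSpace.comap (Xo m j) inferInstance)] :=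
      condExp_nonneg (Filter.Eventually.of_forall fun ω => le_max_right _ _)
    have hfinal : (fun ω => max (g (l-1) (Xo n (l-1) ω)
          - ∫ y, v l y ∂(κ l (Xo n (l-1) ω))) 0)
        ≤ᵐ[P] P[(fun ω => max (g (l-1) (Xo n (l-1) ω)
          - (Nd:ℝ)⁻¹ * ∑ nd : Fin Nd, v l (Xi n nd l ω)) 0)|(⨆ (m : Fin N) (j ∈ Finset.range (J + 1)), MeasurableSpace.comap (Xo m j) inferInstance)] := by
      filter_upwards [hmono, hsub, hzk, hnonneg] with ω h₁ h₂ h₃ h₄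
      have hfg : (fun ω => g (l-1) (Xo n (l-1) ω)
          - (Nd:ℝ)⁻¹ * ∑ nd : Fin Nd, v l (Xi n nd l ω))
          = ((fun ω => g (l-1) (Xo n (l-1) ω))
            - (fun ω => (Nd:ℝ)⁻¹ * ∑ nd : Fin Nd, v l (Xi n nd l ω)) : Ω → ℝ) := rfl
      rw [hfg, h₂] at h₁
      simp only [Pi.sub_apply, hba, h₃] at h₁
      exact max_le (by linarith [h₁]) h₄
    calc ∫ ω, max (g (l-1) (Xo n (l-1) ω) - ∫ y, v l y ∂(κ l (Xo n (l-1) ω))) 0 ∂P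
        ≤ ∫ ω, (P[(fun ω => max (g (l-1) (Xo n (l-1) ω)
            - (Nd:ℝ)⁻¹ * ∑ nd : Fin Nd, v l (Xi n nd l ω)) 0)|(⨆ (m : Fin N) (j ∈ Finset.range (J + 1)), MeasurableSpace.comap (Xo m j) inferInstance)]) ω ∂P :=
          integral_mono_ae ((haInt.sub hMf).pos_part) integrable_condExp hfinal
      _ = ∫ ω, max (g (l-1) (Xo n (l-1) ω)
            - (Nd:ℝ)⁻¹ * ∑ nd : Fin Nd, v l (Xi n nd l ω)) 0 ∂P :=
          integral_condExp h𝒢le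

  -- transfer of the kernel-mean functional along the path law
  have hl1lt : ∀ l : ℕ, min (l-1) J < J + 1 := fun l => Nat.lt_succ_of_le (min_le_right _ _)
  have key5 : ∀ n : Fin N,
      ∫ ω, (g J (Xo n J ω) + ∑ l ∈ Finset.Icc 1 J,
        max (g (l-1) (Xo n (l-1) ω) - ∫ y, v l y ∂(κ l (Xo n (l-1) ω))) 0) ∂P
      = ∫ ω, (g J (X J ω) + ∑ l ∈ Finset.Icc 1 J,
        max (g (l-1) (X (l-1) ω) - ∫ y, v l y ∂(κ l (X (l-1) ω))) 0) ∂P := by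
    intro n
    set F : (Fin (J+1) → (Fin d → ℝ)) → ℝ := fun p =>
      g J (p (Fin.last J)) + ∑ l ∈ Finset.Icc 1 J,
        max (g (l-1) (p ⟨min (l-1) J, hl1lt l⟩)
          - ∫ y, v l y ∂(κ l (p ⟨min (l-1) J, hl1lt l⟩))) 0 with hFdef
    have hFm : Measurable F := by
      refine ((hgm J).comp (measurable_pi_apply _)).add ?_
      refine Finset.measurable_sum _ fun l hl => ?_
      refine Measurable.max ?_ measurable_const
      exact ((hgm (l-1)).comp (measurable_pi_apply _)).sub
        ((hFkm l).measurable.comp (measurable_pi_apply _))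
    have hpt : ∀ (Y : ℕ → Ω → (Fin d → ℝ)), ∀ ω : Ω,
        F (fun j : Fin (J+1) => Y (j:ℕ) ω)
          = g J (Y J ω) + ∑ l ∈ Finset.Icc 1 J,
            max (g (l-1) (Y (l-1) ω) - ∫ y, v l y ∂(κ l (Y (l-1) ω))) 0 := by
      intro Y ω
      simp only [hFdef, Fin.val_last]
      refine congrArg₂ (· + ·) rfl ?_
      refine Finset.sum_congr rfl fun l hl => ?_
      rw [Finset.mem_Icc] at hl
      have hmin : min (l-1) J = l - 1 := min_eq_left (le_trans (Nat.sub_le l 1) hl.2)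
      simp [hmin]
    have e1 : ∫ ω, F (fun j : Fin (J+1) => Xo n (j:ℕ) ω) ∂P
        = ∫ ω, F (fun j : Fin (J+1) => X (j:ℕ) ω) ∂P := by
      rw [← integral_map (hpathXo n).aemeasurable hFm.aestronglyMeasurable,
        ← integral_map hpathX.aemeasurable hFm.aestronglyMeasurable, hlaw n]
    calc ∫ ω, (g J (Xo n J ω) + ∑ l ∈ Finset.Icc 1 J,
          max (g (l-1) (Xo n (l-1) ω) - ∫ y, v l y ∂(κ l (Xo n (l-1) ω))) 0) ∂P
        = ∫ ω, F (fun j : Fin (J+1) => Xo n (j:ℕ) ω) ∂P :=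
          integral_congr_ae (Filter.Eventually.of_forall fun ω => (hpt (Xo n) ω).symm)
      _ = ∫ ω, F (fun j : Fin (J+1) => X (j:ℕ) ω) ∂P := e1
      _ = _ := integral_congr_ae (Filter.Eventually.of_forall fun ω => hpt X ω)
  -- integrability of the estimator's summands
  have hterm : ∀ (n : Fin N) (l : ℕ), l ∈ Finset.Icc 1 J →
      Integrable (fun ω => max (g (l-1) (Xo n (l-1) ω)
        - (Nd:ℝ)⁻¹ * ∑ nd : Fin Nd, v l (Xi n nd l ω)) 0) P := by
    intro n l hl
    rw [Finset.mem_Icc] at hl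
    exact ((hgInt n (l-1) (le_trans (Nat.sub_le l 1) hl.2)).sub
      ((integrable_finset_sum Finset.univ
        (fun (nd : Fin Nd) _ => hviInt n nd l hl.1 hl.2)).const_mul _)).pos_part
  have htermM : ∀ (n : Fin N) (l : ℕ), l ∈ Finset.Icc 1 J →
      Integrable (fun ω => max (g (l-1) (Xo n (l-1) ω)
        - ∫ y, v l y ∂(κ l (Xo n (l-1) ω))) 0) P := by
    intro n l hl
    rw [Finset.mem_Icc] at hl
    exact ((hgInt n (l-1) (le_trans (Nat.sub_le l 1) hl.2)).sub
      (hmInt n l hl.1 hl.2)).pos_part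
  have hInn : ∀ n : Fin N, Integrable (fun ω => (g J (Xo n J ω) + ∑ j ∈ Finset.Icc 1 J, max (g (j - 1) (Xo n (j - 1) ω) - (Nd : ℝ)⁻¹ * ∑ nd : Fin Nd, v j (Xi n nd j ω)) 0)) P :=
    fun n => (hgInt n J le_rfl).add (integrable_finset_sum _ (hterm n))
  -- per-path inequality
  have hpern : ∀ n : Fin N,
      (∫ ω, (g J (X J ω) + ∑ l ∈ Finset.Icc 1 J,
        max (g (l-1) (X (l-1) ω) - ∫ y, v l y ∂(κ l (X (l-1) ω))) 0) ∂P)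
      ≤ ∫ ω, (g J (Xo n J ω) + ∑ j ∈ Finset.Icc 1 J, max (g (j - 1) (Xo n (j - 1) ω) - (Nd : ℝ)⁻¹ * ∑ nd : Fin Nd, v j (Xi n nd j ω)) 0) ∂P := by
    intro n
    rw [← key5 n]
    rw [integral_add (hgInt n J le_rfl) (integrable_finset_sum _ (htermM n)),
      integral_add (hgInt n J le_rfl) (integrable_finset_sum _ (hterm n)),
      integral_finset_sum _ (htermM n), integral_finset_sum _ (hterm n)]
    refine add_le_add_right (Finset.sum_le_sum fun l hl => ?_) _
    rw [Finset.mem_Icc] at hl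
    exact key4 n l hl.1 hl.2
  -- conclusion
  have hNpos : (0:ℝ) < N := by
    have : 0 < N := by omega
    exact_mod_cast this
  have hRHS : ∫ ω, (N : ℝ)⁻¹ * ∑ n : Fin N, (g J (Xo n J ω) + ∑ j ∈ Finset.Icc 1 J, max (g (j - 1) (Xo n (j - 1) ω) - (Nd : ℝ)⁻¹ * ∑ nd : Fin Nd, v j (Xi n nd j ω)) 0) ∂P
      = (N:ℝ)⁻¹ * ∑ n : Fin N, ∫ ω, (g J (Xo n J ω) + ∑ j ∈ Finset.Icc 1 J, max (g (j - 1) (Xo n (j - 1) ω) - (Nd : ℝ)⁻¹ * ∑ nd : Fin Nd, v j (Xi n nd j ω)) 0) ∂P := by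
    rw [integral_const_mul, integral_finset_sum _ (fun n _ => hInn n)]
  rw [hRHS]
  have hsum : (N:ℝ) * (∫ ω, (g J (X J ω) + ∑ l ∈ Finset.Icc 1 J,
        max (g (l-1) (X (l-1) ω) - ∫ y, v l y ∂(κ l (X (l-1) ω))) 0) ∂P)
      ≤ ∑ n : Fin N, ∫ ω, (g J (Xo n J ω) + ∑ j ∈ Finset.Icc 1 J, max (g (j - 1) (Xo n (j - 1) ω) - (Nd : ℝ)⁻¹ * ∑ nd : Fin Nd, v j (Xi n nd j ω)) 0) ∂P := by
    calc (N:ℝ) * _ = ∑ _n : Fin N, (∫ ω, (g J (X J ω) + ∑ l ∈ Finset.Icc 1 J,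
          max (g (l-1) (X (l-1) ω) - ∫ y, v l y ∂(κ l (X (l-1) ω))) 0) ∂P) := by
          rw [Finset.sum_const, Finset.card_univ, Fintype.card_fin, nsmul_eq_mul]
      _ ≤ _ := Finset.sum_le_sum fun n _ => hpern n
  calc (∫ ω, (g J (X J ω) + ∑ l ∈ Finset.Icc 1 J,
        max (g (l-1) (X (l-1) ω) - ∫ y, v l y ∂(κ l (X (l-1) ω))) 0) ∂P)
      = (N:ℝ)⁻¹ * ((N:ℝ) * _) := by
        rw [← mul_assoc, inv_mul_cancel₀ (ne_of_gt hNpos), one_mul]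
    _ ≤ _ := mul_le_mul_of_nonneg_left hsum (by positivity)
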